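/- Let d ∈ ℝⁿ and 1 ≤ k ≤ n. Then the minimum of (1/2)‖c − d‖₂² over the nonconvex set {c ∈ ℝⁿ : ‖c‖₀ ≤ k and Σᵢ cᵢ = 1} equals the minimum over all subsets S ⊆ {1,…,n} with |S| = k of the quantity (1/2)Σ_{i∉S} dᵢ² + (Σ_{i∈S} dᵢ − 1)²/(2k). -/

import Mathlib

/-- For `d ∈ ℝⁿ` and `1 ≤ k ≤ n`, the minimum of
`(1/2)‖c − d‖₂²` over `{c : ‖c‖₀ ≤ k, ∑ᵢ cᵢ = 1}` equals the minimum over all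
`S ⊆ {1,…,n}` with `|S| = k` of `(1/2)∑_{i∉S} dᵢ² + (∑_{i∈S} dᵢ − 1)²/(2k)`. -/
theorem stmt10 (n : ℕ) (d : Fin n → ℝ) (k : ℕ) (hk1 : 1 ≤ k) (hkn : k ≤ n) :
    sInf {y : ℝ | ∃ c : Fin n → ℝ, {i | c i ≠ 0}.ncard ≤ k ∧ (∑ i, c i = 1) ∧
        y = (1/2) * ∑ i, (c i - d i)^2}
    = sInf {y : ℝ | ∃ S : Finset (Fin n), S.card = k ∧
        y = (1/2) * ∑ i ∈ Sᶜ, (d i)^2 + (∑ i ∈ S, d i - 1)^2 / (2 * (k : ℝ))} := by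
  set f : Finset (Fin n) → ℝ := fun S =>
    (1/2) * ∑ i ∈ Sᶜ, (d i)^2 + (∑ i ∈ S, d i - 1)^2 / (2 * (k : ℝ)) with hf
  set A := {y : ℝ | ∃ c : Fin n → ℝ, {i | c i ≠ 0}.ncard ≤ k ∧ (∑ i, c i = 1) ∧
      y = (1/2) * ∑ i, (c i - d i)^2} with hA
  set B := {y : ℝ | ∃ S : Finset (Fin n), S.card = k ∧ y = f S} with hB
  have hk0 : (k : ℝ) ≠ 0 := by positivity
  -- Lemma 1: each f S (S.card = k) is attained in A
  have lem1 : ∀ S : Finset (Fin n), S.card = k → f S ∈ A := by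
    intro S hS
    set s := ∑ i ∈ S, d i with hs
    refine ⟨fun i => if i ∈ S then d i + (1 - s) / k else 0, ?_, ?_, ?_⟩
    · refine le_trans (Set.ncard_le_ncard (t := (S : Set (Fin n))) ?_ S.finite_toSet) ?_
      · intro i hi
        simp only [Set.mem_setOf_eq] at hi
        by_contra h
        simp only [Finset.mem_coe] at h
        rw [if_neg h] at hi
        exact hi rfl
      · simp [hS]
    · rw [Finset.sum_ite_mem, Finset.univ_inter, Finset.sum_add_distrib,
        Finset.sum_const, hS, ← hs, nsmul_eq_mul]
      field_simp
      ring
    · have h1 : ∑ i, ((if i ∈ S then d i + (1 - s) / k else 0) - d i)^2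
          = ∑ i ∈ S, ((1 - s)/k)^2 + ∑ i ∈ Sᶜ, (d i)^2 := by
        rw [← Finset.sum_add_sum_compl S]
        congr 1
        · exact Finset.sum_congr rfl (fun i hi => by rw [if_pos hi]; ring)
        · refine Finset.sum_congr rfl (fun i hi => ?_)
          rw [Finset.mem_compl] at hi
          simp [hi]
      rw [h1, Finset.sum_const, hS]
      simp only [hf, nsmul_eq_mul]
      field_simp
      ring
  -- Lemma 2: every element of A dominates some f S with S.card = k
  have lem2 : ∀ y ∈ A, ∃ S : Finset (Fin n), S.card = k ∧ f S ≤ y := by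
    rintro y ⟨c, hcard, hsum, rfl⟩
    set T := (Set.toFinite {i | c i ≠ 0}).toFinset with hT
    have hTcard : T.card ≤ k := by
      rw [hT, ← Set.ncard_eq_toFinset_card _ (Set.toFinite _)]
      exact hcard
    obtain ⟨S, hTS, hSk⟩ := Finset.exists_superset_card_eq hTcard (by simpa using hkn)
    have hzero : ∀ i ∉ S, c i = 0 := by
      intro i hi
      by_contra h
      exact hi (hTS (by simp [hT, h]))
    refine ⟨S, hSk, ?_⟩
    have hsplit : ∑ i, (c i - d i)^2 = ∑ i ∈ S, (c i - d i)^2 + ∑ i ∈ Sᶜ, (d i)^2 := by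
      rw [← Finset.sum_add_sum_compl S]
      congr 1
      refine Finset.sum_congr rfl (fun i hi => ?_)
      rw [Finset.mem_compl] at hi
      simp [hzero i hi]
    have hsumS : ∑ i ∈ S, c i = 1 := by
      rw [← hsum, ← Finset.sum_add_sum_compl S]
      simp [Finset.sum_congr rfl (fun i hi => hzero i (Finset.mem_compl.mp hi))]
    have hCS : (∑ i ∈ S, d i - 1)^2 ≤ (k : ℝ) * ∑ i ∈ S, (c i - d i)^2 := by
      have := sq_sum_le_card_mul_sum_sq (s := S) (f := fun i => d i - c i)
      rw [Finset.sum_sub_distrib, hsumS, hSk] at this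
      calc (∑ i ∈ S, d i - 1)^2 ≤ (k : ℝ) * ∑ i ∈ S, (d i - c i)^2 := by exact_mod_cast this
        _ = (k : ℝ) * ∑ i ∈ S, (c i - d i)^2 := by
            congr 1; exact Finset.sum_congr rfl (fun i _ => by ring)
    have hk0' : (0:ℝ) < 2 * k := by positivity
    have hmain : (∑ i ∈ S, d i - 1)^2 / (2*(k:ℝ)) ≤ (1/2) * ∑ i ∈ S, (c i - d i)^2 := by
      rw [div_le_iff₀ hk0']
      nlinarith [hCS]
    rw [hsplit]
    simp only [hf]
    linarith
  -- B is finite and nonempty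
  have hBsub : B ⊆ Set.range f := by rintro y ⟨S, _, rfl⟩; exact ⟨S, rfl⟩
  have hBfin : B.Finite := (Set.finite_range f).subset hBsub
  obtain ⟨S0, hS0sub, hS0⟩ := Finset.exists_subset_card_eq (s := (Finset.univ : Finset (Fin n)))
    (n := k) (by simpa using hkn)
  have hBne : B.Nonempty := ⟨f S0, S0, hS0, rfl⟩
  have hBbdd : BddBelow B := hBfin.bddBelow
  have hAlb : ∀ y ∈ A, sInf B ≤ y := by
    intro y hy
    obtain ⟨S, hSk, hle⟩ := lem2 y hy
    exact le_trans (csInf_le hBbdd ⟨S, hSk, rfl⟩) hle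
  have hAne : A.Nonempty := ⟨f S0, lem1 S0 hS0⟩
  have hAbdd : BddBelow A := ⟨sInf B, hAlb⟩
  apply le_antisymm
  · obtain ⟨S, hSk, hEq⟩ := hBne.csInf_mem hBfin
    calc sInf A ≤ f S := csInf_le hAbdd (lem1 S hSk)
      _ = sInf B := hEq.symm
  · exact le_csInf hAne hAlb
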